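/- Let R be a noetherian commutative ring and M an R-module. If Ext^i_R(M, κ(p)) = 0 for every i ≥ 0 and every prime ideal p of R, then M = 0. -/

import Mathlib

open CategoryTheory

universe u

/-- `κ(p)`: the residue field of the localization of `R` at the prime `p`. -/
noncomputable abbrev kappa {R : Type u} [CommRing R] (p : Ideal R) [p.IsPrime] : Type u :=
  IsLocalRing.ResidueField (Localization.AtPrime p)

open TensorProduct

section core
variable {R : Type u} [CommRing R]
variable (X : ℕ → Type u) [∀ n, AddCommGroup (X n)] [∀ n, Module R (X n)]
variable (d : ∀ n, X (n+1) →ₗ[R] X n)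

/-- Acyclicity of the tensored complex `N ⊗ X_•`, including surjectivity at the bottom
(vanishing of `N ⊗ M` where `M` is the augmentation). -/
def IsAcyc (N : Type u) [AddCommGroup N] [Module R N] : Prop :=
  Function.Surjective ((d 0).lTensor N) ∧
  ∀ i, Function.Exact ((d (i+1)).lTensor N) ((d i).lTensor N)

variable {X d}

lemma lr_comm {A B : Type u} [AddCommGroup A] [Module R A] [AddCommGroup B] [Module R B]
    (ρ : A →ₗ[R] B) {Y Z : Type u} [AddCommGroup Y] [Module R Y] [AddCommGroup Z] [Module R Z]
    (φ : Y →ₗ[R] Z) (v : A ⊗[R] Y) :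
    ρ.rTensor Z (φ.lTensor A v) = φ.lTensor B (ρ.rTensor Y v) := by
  rw [← LinearMap.comp_apply, ← LinearMap.comp_apply, LinearMap.rTensor_comp_lTensor,
    LinearMap.lTensor_comp_rTensor]

lemma exact_of_comp_zero {A B C : Type u} [AddCommGroup A] [Module R A] [AddCommGroup B]
    [Module R B] [AddCommGroup C] [Module R C] {u : A →ₗ[R] B} {v : B →ₗ[R] C}
    (hcomp : v ∘ₗ u = 0) (h : ∀ y, v y = 0 → ∃ w, u w = y) : Function.Exact u v := by
  intro y
  refine ⟨h y, ?_⟩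
  rintro ⟨w, rfl⟩
  rw [← LinearMap.comp_apply, hcomp]
  rfl

theorem IsAcyc.of_ses (hd : ∀ n, d n ∘ₗ d (n+1) = 0) (hflat : ∀ n, Module.Flat R (X n))
    {A B C : Type u} [AddCommGroup A] [Module R A] [AddCommGroup B] [Module R B]
    [AddCommGroup C] [Module R C]
    (f : A →ₗ[R] B) (g : B →ₗ[R] C) (hf : Function.Injective f)
    (hfg : Function.Exact f g) (hg : Function.Surjective g)
    (hA : IsAcyc X d A) (hC : IsAcyc X d C) : IsAcyc X d B := by
  have hltd : ∀ (N : Type u) [AddCommGroup N] [Module R N] (i : ℕ),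
      ((d i).lTensor N) ∘ₗ ((d (i+1)).lTensor N) = 0 := by
    intro N _ _ i
    rw [← LinearMap.lTensor_comp, hd i, LinearMap.lTensor_zero]
  constructor
  · -- surjectivity at the bottom
    intro x
    obtain ⟨zc, hzc⟩ := hC.1 ((g.rTensor (X 0)) x)
    obtain ⟨z, rfl⟩ := LinearMap.rTensor_surjective (X 1) hg zc
    have hx₂ : g.rTensor (X 0) (x - (d 0).lTensor B z) = 0 := by
      rw [map_sub, lr_comm g (d 0) z, hzc, sub_self]
    letI := hflat 0
    obtain ⟨a, ha⟩ := (Module.Flat.rTensor_exact (X 0) hfg _).mp hx₂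
    obtain ⟨w, hw⟩ := hA.1 a
    refine ⟨z + f.rTensor (X 1) w, ?_⟩
    rw [map_add, ← lr_comm f (d 0) w, hw, ha]
    abel
  · -- exactness at spot i+1
    intro i
    refine exact_of_comp_zero (hltd B i) (fun x hx => ?_)
    -- push to C
    have hCc : (d i).lTensor C (g.rTensor (X (i+1)) x) = 0 := by
      rw [← lr_comm, hx, map_zero]
    obtain ⟨zc, hzc⟩ := (hC.2 i _).mp hCc
    obtain ⟨z, rfl⟩ := LinearMap.rTensor_surjective (X (i+2)) hg zc
    have hx₂g : g.rTensor (X (i+1)) (x - (d (i+1)).lTensor B z) = 0 := by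
      rw [map_sub, lr_comm g (d (i+1)) z, hzc, sub_self]
    letI := hflat (i+1)
    obtain ⟨a, ha⟩ := (Module.Flat.rTensor_exact (X (i+1)) hfg _).mp hx₂g
    -- a is a cycle
    have hacycle : (d i).lTensor A a = 0 := by
      letI := hflat i
      apply Module.Flat.rTensor_preserves_injective_linearMap (M := X i) f hf
      have hz0 : (d i).lTensor B ((d (i+1)).lTensor B z) = 0 := by
        rw [← LinearMap.comp_apply, hltd B i]; rfl
      rw [map_zero, lr_comm f (d i) a, ha, map_sub, hx, hz0, sub_self]
    obtain ⟨w, hw⟩ := (hA.2 i _).mp hacycle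
    refine ⟨z + f.rTensor (X (i+2)) w, ?_⟩
    rw [map_add, ← lr_comm f (d (i+1)) w, hw, ha]
    abel

end core

variable {R : Type u} [CommRing R] (p : Ideal R) [p.IsPrime]

theorem algebraMap_kappa_eq_zero_iff (x : R) :
    algebraMap R (kappa p) x = 0 ↔ x ∈ p := by
  rw [IsScalarTower.algebraMap_apply R (Localization.AtPrime p) (kappa p)]
  rw [show (algebraMap (Localization.AtPrime p) (kappa p)) = IsLocalRing.residue _ from rfl]
  rw [IsLocalRing.residue_eq_zero_iff]
  constructor
  · intro hmem
    have := Localization.AtPrime.comap_maximalIdeal (I := p)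
    rw [← this]
    exact hmem
  · intro hx
    have := Localization.AtPrime.comap_maximalIdeal (I := p)
    rw [← this] at hx
    exact hx

/-- The canonical `R`-linear injection `R⧸p → κ(p)`. -/
noncomputable def jmap : (R ⧸ p) →ₗ[R] kappa p :=
  Submodule.liftQ p (Algebra.linearMap R (kappa p)) (by
    intro x hx
    simpa [Algebra.linearMap_apply] using (algebraMap_kappa_eq_zero_iff p x).mpr hx)

theorem jmap_mk (x : R) : jmap p (Submodule.Quotient.mk x) = algebraMap R (kappa p) x := rfl

theorem jmap_injective : Function.Injective (jmap p) := by
  rw [← LinearMap.ker_eq_bot, eq_bot_iff]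
  rintro y hy
  obtain ⟨x, rfl⟩ := Submodule.Quotient.mk_surjective p y
  rw [LinearMap.mem_ker, jmap_mk] at hy
  rw [Submodule.mem_bot, Submodule.Quotient.mk_eq_zero]
  exact (algebraMap_kappa_eq_zero_iff p x).mp hy

theorem kappa_denom (c : kappa p) : ∃ s, s ∉ p ∧ ∃ r : R, s • c = algebraMap R (kappa p) r := by
  obtain ⟨y, rfl⟩ := IsLocalRing.residue_surjective (R := Localization.AtPrime p) c
  obtain ⟨⟨r, s⟩, rfl⟩ := IsLocalization.mk'_surjective p.primeCompl y
  refine ⟨s, s.2, r, ?_⟩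
  have h1 : (s : R) • (IsLocalRing.residue (Localization.AtPrime p)
      (IsLocalization.mk' (Localization.AtPrime p) r s))
      = IsLocalRing.residue _ ((s : R) • IsLocalization.mk' (Localization.AtPrime p) r s) := by
    rw [Algebra.smul_def, Algebra.smul_def, map_mul,
      IsScalarTower.algebraMap_apply R (Localization.AtPrime p) (kappa p)]
    rfl
  rw [h1]
  have h2 : (s : R) • IsLocalization.mk' (Localization.AtPrime p) r s
      = algebraMap R (Localization.AtPrime p) r := by
    rw [Algebra.smul_def]
    exact IsLocalization.mk'_spec' _ r s
  rw [h2]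
  rw [IsScalarTower.algebraMap_apply R (Localization.AtPrime p) (kappa p)]
  rfl

/-- Denominator clearing at the tensor level. -/
theorem kappa_tensor_denom (X : Type u) [AddCommGroup X] [Module R X]
    (v : (kappa p) ⊗[R] X) :
    ∃ s, s ∉ p ∧ ∃ w : (R ⧸ p) ⊗[R] X, (jmap p).rTensor X w = s • v := by
  refine TensorProduct.induction_on v ⟨1, p.primeCompl.one_mem, 0, by simp⟩ ?_ ?_
  · intro c x
    obtain ⟨s, hs, r, hr⟩ := kappa_denom p c
    refine ⟨s, hs, (Submodule.Quotient.mk r) ⊗ₜ x, ?_⟩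
    rw [LinearMap.rTensor_tmul, jmap_mk, smul_tmul', ← hr]
  · rintro v₁ v₂ ⟨s₁, hs₁, w₁, hw₁⟩ ⟨s₂, hs₂, w₂, hw₂⟩
    refine ⟨s₁ * s₂, p.primeCompl.mul_mem hs₁ hs₂, s₂ • w₁ + s₁ • w₂, ?_⟩
    rw [map_add, map_smul, map_smul, hw₁, hw₂, smul_add, smul_smul, smul_smul, mul_comm s₁ s₂]


section prime_case
variable {R : Type u} [CommRing R]
variable {X : ℕ → Type u} [∀ n, AddCommGroup (X n)] [∀ n, Module R (X n)]
variable {d : ∀ n, X (n+1) →ₗ[R] X n}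

/-- Multiplication by `s` as a linear endomorphism. -/
private def msmul (s : R) (N : Type u) [AddCommGroup N] [Module R N] : N →ₗ[R] N :=
  s • (LinearMap.id)

private lemma msmul_apply (s : R) {N : Type u} [AddCommGroup N] [Module R N] (x : N) :
    msmul s N x = s • x := rfl

private lemma rTensor_msmul (s : R) {N : Type u} [AddCommGroup N] [Module R N]
    (Y : Type u) [AddCommGroup Y] [Module R Y] (v : N ⊗[R] Y) :
    (msmul s N).rTensor Y v = s • v := by
  refine TensorProduct.induction_on v (by simp) (fun a y => ?_) (fun a b ha hb => by
    simp only [map_add, smul_add, ha, hb])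
  rw [LinearMap.rTensor_tmul, msmul_apply, smul_tmul']

section descend
variable (p : Ideal R) [p.IsPrime]

private lemma smul_eq_zero_on_quot_sup (s : R) {Y : Type u} [AddCommGroup Y] [Module R Y]
    (v : (R ⧸ (p ⊔ Ideal.span {s})) ⊗[R] Y) : s • v = 0 := by
  refine TensorProduct.induction_on v (by simp) (fun a y => ?_) (fun a b ha hb => by
    rw [smul_add, ha, hb, add_zero])
  rw [smul_tmul']
  obtain ⟨x, rfl⟩ := Submodule.Quotient.mk_surjective _ a
  have : s • (Submodule.Quotient.mk x : R ⧸ (p ⊔ Ideal.span {s})) = 0 := by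
    rw [← Submodule.Quotient.mk_smul, Submodule.Quotient.mk_eq_zero]
    exact Submodule.mem_sup_right (Ideal.mem_span_singleton'.mpr ⟨x, by
      rw [smul_eq_mul, mul_comm]⟩)
  rw [this, zero_tmul]

/-- The key descent step: if `s • x` is a boundary in `(R⧸p) ⊗ X_•` for some `s ∉ p`,
then so is `x`, provided the complex tensored with `R⧸(p + (s))` is acyclic. -/
private lemma descend (hd : ∀ n, d n ∘ₗ d (n+1) = 0) (hflat : ∀ n, Module.Flat R (X n))
    (n : ℕ) (s : R) (hs : s ∉ p)
    (hA'' : IsAcyc X d (R ⧸ (p ⊔ Ideal.span {s})))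
    (x : (R ⧸ p) ⊗[R] X n) (w : (R ⧸ p) ⊗[R] X (n+1))
    (hw : (d n).lTensor _ w = s • x) :
    ∃ u, (d n).lTensor _ u = x := by
  set A'' := R ⧸ (p ⊔ Ideal.span {s}) with hA''def
  -- the two maps of the SES  R⧸p --s--> R⧸p --> A''
  set ms : (R ⧸ p) →ₗ[R] (R ⧸ p) := msmul s _ with hmsdef
  set gs : (R ⧸ p) →ₗ[R] A'' := Submodule.mapQ _ _ LinearMap.id le_sup_left with hgsdef
  have hgs_mk : ∀ y : R, gs (Submodule.Quotient.mk y) = Submodule.Quotient.mk y := fun y => rfl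
  have hms_inj : Function.Injective ms := by
    rw [← LinearMap.ker_eq_bot, eq_bot_iff]
    rintro y hy
    obtain ⟨x', rfl⟩ := Submodule.Quotient.mk_surjective _ y
    rw [LinearMap.mem_ker, hmsdef, msmul_apply, ← Submodule.Quotient.mk_smul,
      Submodule.Quotient.mk_eq_zero] at hy
    rw [Submodule.mem_bot, Submodule.Quotient.mk_eq_zero]
    rcases (Ideal.IsPrime.mem_or_mem ‹p.IsPrime›) (by simpa [smul_eq_mul] using hy) with h | h
    · exact absurd h hs
    · exact h
  have hms_gs : Function.Exact ms gs := by
    intro y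
    constructor
    · intro hy
      obtain ⟨x', rfl⟩ := Submodule.Quotient.mk_surjective _ y
      rw [hgs_mk, Submodule.Quotient.mk_eq_zero] at hy
      obtain ⟨c, hc, b, hb, rfl⟩ := Submodule.mem_sup.mp hy
      obtain ⟨t, rfl⟩ := Ideal.mem_span_singleton'.mp hb
      refine ⟨Submodule.Quotient.mk t, ?_⟩
      rw [hmsdef, msmul_apply, ← Submodule.Quotient.mk_smul]
      rw [show (Submodule.Quotient.mk (c + t * s) : R ⧸ p)
        = Submodule.Quotient.mk (t * s) from ?_]
      · congr 1
        rw [smul_eq_mul, mul_comm]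
      · rw [Submodule.Quotient.eq]
        simpa using hc
    · rintro ⟨u, rfl⟩
      obtain ⟨x', rfl⟩ := Submodule.Quotient.mk_surjective _ u
      rw [hmsdef, msmul_apply, ← Submodule.Quotient.mk_smul, hgs_mk,
        Submodule.Quotient.mk_eq_zero]
      exact Submodule.mem_sup_right (Ideal.mem_span_singleton'.mpr ⟨x', by
        rw [smul_eq_mul, mul_comm]⟩)
  have hgs_surj : Function.Surjective gs := by
    rintro y
    obtain ⟨x', rfl⟩ := Submodule.Quotient.mk_surjective _ y
    exact ⟨Submodule.Quotient.mk x', rfl⟩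
  -- push w to A'' : it is a cycle there
  have hwbar_cycle : (d n).lTensor A'' (gs.rTensor (X (n+1)) w) = 0 := by
    rw [← lr_comm, hw, map_smul, smul_eq_zero_on_quot_sup p s]
  obtain ⟨zbar, hzbar⟩ := (hA''.2 n _).mp hwbar_cycle
  obtain ⟨z, rfl⟩ := LinearMap.rTensor_surjective (X (n+2)) hgs_surj zbar
  have hw₂ : gs.rTensor (X (n+1)) (w - (d (n+1)).lTensor _ z) = 0 := by
    rw [map_sub, lr_comm gs (d (n+1)) z, hzbar, sub_self]
  letI := hflat (n+1)
  obtain ⟨u', hu'⟩ := (Module.Flat.rTensor_exact (X (n+1)) hms_gs _).mp hw₂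
  have hkey : (d n).lTensor _ (w - (d (n+1)).lTensor _ z) = s • x := by
    have hz0 : (d n).lTensor (R ⧸ p) ((d (n+1)).lTensor _ z) = 0 := by
      rw [← LinearMap.comp_apply, ← LinearMap.lTensor_comp, hd n, LinearMap.lTensor_zero]
      rfl
    rw [map_sub, hw, hz0, sub_zero]
  rw [← hu'] at hkey
  rw [← lr_comm ms (d n) u', rTensor_msmul] at hkey
  refine ⟨u', ?_⟩
  letI := hflat n
  apply Module.Flat.rTensor_preserves_injective_linearMap (M := X n) ms hms_inj
  rw [rTensor_msmul, rTensor_msmul, hkey]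

/-- Acyclicity for `R⧸p`, `p` prime, given acyclicity for `κ(p)` and for all
`R⧸(p + (s))`, `s ∉ p`. -/
theorem isAcyc_quotient_prime (hd : ∀ n, d n ∘ₗ d (n+1) = 0)
    (hflat : ∀ n, Module.Flat R (X n))
    (hκ : IsAcyc X d (kappa p))
    (hIH : ∀ s : R, s ∉ p → IsAcyc X d (R ⧸ (p ⊔ Ideal.span {s}))) :
    IsAcyc X d (R ⧸ p) := by
  have hstep1 : ∀ (n : ℕ) (x : (R ⧸ p) ⊗[R] X n) (yhat : (kappa p) ⊗[R] X (n+1)),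
      (d n).lTensor _ yhat = (jmap p).rTensor (X n) x →
      ∃ s, s ∉ p ∧ ∃ w, (d n).lTensor (R ⧸ p) w = s • x := by
    intro n x yhat hyhat
    obtain ⟨s, hs, w, hw⟩ := kappa_tensor_denom p (X (n+1)) yhat
    refine ⟨s, hs, w, ?_⟩
    letI := hflat n
    apply Module.Flat.rTensor_preserves_injective_linearMap (M := X n) (jmap p)
      (jmap_injective p)
    rw [lr_comm (jmap p) (d n) w, hw, map_smul, hyhat, map_smul]
  constructor
  · -- surjectivity at the bottom
    intro x
    obtain ⟨yhat, hyhat⟩ := hκ.1 ((jmap p).rTensor (X 0) x)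
    obtain ⟨s, hs, w, hw⟩ := hstep1 0 x yhat hyhat
    obtain ⟨u, hu⟩ := descend p hd hflat 0 s hs (hIH s hs) x w hw
    exact ⟨u, hu⟩
  · intro i
    refine exact_of_comp_zero (by
      rw [← LinearMap.lTensor_comp, hd i, LinearMap.lTensor_zero]) (fun x hx => ?_)
    have hcyc : (d i).lTensor (kappa p) ((jmap p).rTensor (X (i+1)) x) = 0 := by
      rw [← lr_comm, hx, map_zero]
    obtain ⟨yhat, hyhat⟩ := (hκ.2 i _).mp hcyc
    obtain ⟨s, hs, w, hw⟩ := hstep1 (i+1) x yhat hyhat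
    exact descend p hd hflat (i+1) s hs (hIH s hs) x w hw

end descend
end prime_case

section induction
variable {R : Type u} [CommRing R]
variable {X : ℕ → Type u} [∀ n, AddCommGroup (X n)] [∀ n, Module R (X n)]
variable {d : ∀ n, X (n+1) →ₗ[R] X n}

lemma isAcyc_of_subsingleton (N : Type u) [AddCommGroup N] [Module R N] [Subsingleton N] :
    IsAcyc X d N := by
  have hz : ∀ (Y : Type u) [AddCommGroup Y] [Module R Y] (v : N ⊗[R] Y), v = 0 := by
    intro Y _ _ v
    refine TensorProduct.induction_on v rfl (fun a y => ?_) (fun a b ha hb => by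
      rw [ha, hb, add_zero])
    rw [Subsingleton.elim a 0, zero_tmul]
  exact ⟨fun x => ⟨0, by rw [hz _ ((d 0).lTensor N 0), hz _ x]⟩,
    fun i y => ⟨fun _ => ⟨0, by rw [hz _ ((d (i+1)).lTensor N 0), hz _ y]⟩,
      fun _ => by rw [hz _ ((d i).lTensor N y)]⟩⟩

theorem isAcyc_quotient [IsNoetherianRing R]
    (hd : ∀ n, d n ∘ₗ d (n+1) = 0) (hflat : ∀ n, Module.Flat R (X n))
    (hκ : ∀ (p : Ideal R) [p.IsPrime], IsAcyc X d (kappa p)) (I : Ideal R) :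
    IsAcyc X d (R ⧸ I) := by
  induction I using IsNoetherian.induction with
  | _ I IH =>
  by_cases hItop : I = ⊤
  · subst hItop
    have : Subsingleton (R ⧸ (⊤ : Ideal R)) :=
      Submodule.Quotient.subsingleton_iff.mpr rfl
    exact isAcyc_of_subsingleton _
  by_cases hIp : Ideal.IsPrime I
  · haveI := hIp
    refine isAcyc_quotient_prime I hd hflat (hκ I) (fun s hs => IH _ ?_)
    · refine lt_of_le_of_ne le_sup_left (fun h => hs ?_)
      rw [h]
      exact Submodule.mem_sup_right (Ideal.mem_span_singleton_self s)
  · -- non-prime, non-top case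
    obtain ⟨a, b, hab, ha, hb⟩ : ∃ a b : R, a * b ∈ I ∧ a ∉ I ∧ b ∉ I := by
      by_contra hcon
      push_neg at hcon
      exact hIp ⟨hItop, fun {x y} hxy => by
        by_cases hx : x ∈ I
        · exact Or.inl hx
        · exact Or.inr (hcon x y hxy hx)⟩
    set J := I.colon (Ideal.span {a}) with hJdef
    have hIJ : I ≤ J := fun x hx => Ideal.mem_colon_span_singleton.mpr (by
      exact Ideal.mul_mem_right a I hx)
    have hbJ : b ∈ J := Ideal.mem_colon_span_singleton.mpr (by
      rw [mul_comm]; exact hab)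
    have hJgt : I < J := lt_of_le_of_ne hIJ (fun h => hb (h ▸ hbJ))
    have hsupgt : I < I ⊔ Ideal.span {a} := by
      refine lt_of_le_of_ne le_sup_left (fun h => ha ?_)
      rw [h]
      exact Submodule.mem_sup_right (Ideal.mem_span_singleton_self a)
    -- the SES  0 → R⧸J --·a--> R⧸I --> R⧸(I + (a)) → 0
    set f : (R ⧸ J) →ₗ[R] (R ⧸ I) := Submodule.mapQ J I (msmul a R)
      (fun x hx => by
        have := Ideal.mem_colon_span_singleton.mp hx
        simpa [msmul_apply, smul_eq_mul, mul_comm] using this) with hfdef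
    set g : (R ⧸ I) →ₗ[R] (R ⧸ (I ⊔ Ideal.span {a})) :=
      Submodule.mapQ I (I ⊔ Ideal.span {a}) LinearMap.id le_sup_left with hgdef
    have hf_mk : ∀ x : R, f (Submodule.Quotient.mk x) = Submodule.Quotient.mk (a * x) := by
      intro x
      rw [hfdef, Submodule.mapQ_apply]
      rfl
    have hg_mk : ∀ x : R, g (Submodule.Quotient.mk x) = Submodule.Quotient.mk x := fun x => rfl
    have hfinj : Function.Injective f := by
      rw [← LinearMap.ker_eq_bot, eq_bot_iff]
      rintro y hy
      obtain ⟨x, rfl⟩ := Submodule.Quotient.mk_surjective _ y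
      rw [LinearMap.mem_ker, hf_mk, Submodule.Quotient.mk_eq_zero] at hy
      rw [Submodule.mem_bot, Submodule.Quotient.mk_eq_zero, hJdef]
      exact Ideal.mem_colon_span_singleton.mpr (by
        rw [mul_comm]; exact hy)
    have hfg : Function.Exact f g := by
      intro y
      constructor
      · intro hy
        obtain ⟨x, rfl⟩ := Submodule.Quotient.mk_surjective _ y
        rw [hg_mk, Submodule.Quotient.mk_eq_zero] at hy
        obtain ⟨c, hc, e, he, rfl⟩ := Submodule.mem_sup.mp hy
        obtain ⟨t, rfl⟩ := Ideal.mem_span_singleton'.mp he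
        refine ⟨Submodule.Quotient.mk t, ?_⟩
        rw [hf_mk]
        rw [show (Submodule.Quotient.mk (c + t * a) : R ⧸ I)
          = Submodule.Quotient.mk (t * a) from ?_]
        · congr 1
          rw [mul_comm]
        · rw [Submodule.Quotient.eq]
          simpa using hc
      · rintro ⟨u, rfl⟩
        obtain ⟨x, rfl⟩ := Submodule.Quotient.mk_surjective _ u
        rw [hf_mk, hg_mk, Submodule.Quotient.mk_eq_zero]
        exact Submodule.mem_sup_right (Ideal.mem_span_singleton'.mpr ⟨x, by rw [mul_comm]⟩)
    have hgsurj : Function.Surjective g := by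
      rintro y
      obtain ⟨x, rfl⟩ := Submodule.Quotient.mk_surjective _ y
      exact ⟨Submodule.Quotient.mk x, rfl⟩
    exact IsAcyc.of_ses hd hflat f g hfinj hfg hgsurj (IH _ hJgt) (IH _ hsupgt)
end induction



variable {R : Type u} [CommRing R] (K : Type u) [Field K] [Algebra R K]
variable {X2 X1 X0 : Type u} [AddCommGroup X2] [Module R X2] [AddCommGroup X1] [Module R X1]
  [AddCommGroup X0] [Module R X0]

private theorem exists_functional {V : Type u} [AddCommGroup V] [Module K V] {W : Submodule K V}
    {u : V} (hu : u ∉ W) :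
    ∃ φ : V →ₗ[K] K, (∀ w ∈ W, φ w = 0) ∧ φ u ≠ 0 := by
  have h : W.mkQ u ≠ 0 := by simpa [Submodule.Quotient.mk_eq_zero] using hu
  have := (Module.forall_dual_apply_eq_zero_iff K (W.mkQ u)).not.mpr h
  push_neg at this
  obtain ⟨ψ, hψ⟩ := this
  exact ⟨ψ.comp W.mkQ, fun w hw => by
    simp [show W.mkQ w = 0 by simpa [Submodule.Quotient.mk_eq_zero] using hw], hψ⟩

theorem dual_surj (d1 : X1 →ₗ[R] X0)
    (h0 : ∀ ψ : X0 →ₗ[R] K, ψ ∘ₗ d1 = 0 → ψ = 0) :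
    Function.Surjective (d1.lTensor K) := by
  intro v
  by_contra hv
  have hv' : v ∉ LinearMap.range (d1.baseChange K) := by
    intro ⟨w, hw⟩
    exact hv ⟨w, by rw [← LinearMap.baseChange_eq_ltensor]; exact hw⟩
  obtain ⟨φ, hφW, hφv⟩ := exists_functional K hv'
  set ψ : X0 →ₗ[R] K := (φ.restrictScalars R) ∘ₗ (TensorProduct.mk R K X0 1) with hψdef
  have hψ : ψ = 0 := by
    apply h0
    ext x
    have : ((1:K) ⊗ₜ[R] d1 x) = d1.baseChange K (1 ⊗ₜ x) := rfl
    simp only [LinearMap.comp_apply, LinearMap.zero_apply, LinearMap.restrictScalars_apply,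
      TensorProduct.mk_apply, hψdef]
    rw [this]
    exact hφW _ ⟨_, rfl⟩
  have : φ = 0 := by
    ext w
    have : φ ((1:K) ⊗ₜ[R] w) = ψ w := rfl
    simpa [this, hψ] using rfl
  rw [this] at hφv
  simp at hφv

theorem dual_exact (d2 : X2 →ₗ[R] X1) (d1 : X1 →ₗ[R] X0) (hd : d1 ∘ₗ d2 = 0)
    (h : ∀ ψ : X1 →ₗ[R] K, ψ ∘ₗ d2 = 0 → ∃ χ : X0 →ₗ[R] K, ψ = χ ∘ₗ d1) :
    Function.Exact (d2.lTensor K) (d1.lTensor K) := by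
  intro v
  constructor
  · intro hv
    by_contra hnv
    have hnv' : v ∉ LinearMap.range (d2.baseChange K) := by
      intro ⟨w, hw⟩
      exact hnv ⟨w, by rw [← LinearMap.baseChange_eq_ltensor]; exact hw⟩
    obtain ⟨φ, hφW, hφv⟩ := exists_functional K hnv'
    set ψ : X1 →ₗ[R] K := (φ.restrictScalars R) ∘ₗ (TensorProduct.mk R K X1 1) with hψdef
    have hψd2 : ψ ∘ₗ d2 = 0 := by
      ext x
      have : ((1:K) ⊗ₜ[R] d2 x) = d2.baseChange K (1 ⊗ₜ x) := rfl
      simp only [LinearMap.comp_apply, LinearMap.zero_apply, LinearMap.restrictScalars_apply,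
        TensorProduct.mk_apply, hψdef]
      rw [this]
      exact hφW _ ⟨_, rfl⟩
    obtain ⟨χ, hχ⟩ := h ψ hψd2
    have key : φ = (χ.liftBaseChange K) ∘ₗ (d1.baseChange K) := by
      ext w
      have h2 : φ ((1:K) ⊗ₜ[R] w) = ψ w := rfl
      have h3 : ψ w = χ (d1 w) := by rw [hχ]; rfl
      simpa [h2, h3, LinearMap.liftBaseChange_tmul] using rfl
    rw [key] at hφv
    simp only [LinearMap.comp_apply] at hφv
    rw [show d1.baseChange K v = d1.lTensor K v from by rw [← LinearMap.baseChange_eq_ltensor],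
      hv] at hφv
    simp at hφv
  · rintro ⟨w, rfl⟩
    rw [← LinearMap.comp_apply, ← LinearMap.lTensor_comp, hd, LinearMap.lTensor_zero]
    rfl


open CategoryTheory


/-- Let `R` be a noetherian commutative ring and `M` an `R`-module.
If `Ext^i_R(M, κ(p)) = 0` for every `i ≥ 0` and every prime ideal `p` of `R`, then
`M = 0`. -/
theorem stmt_14 (R : Type u) [CommRing R] [IsNoetherianRing R]
    (M : Type u) [AddCommGroup M] [Module R M]
    (h : ∀ (i : ℕ), ∀ (p : Ideal R) [p.IsPrime],
      Subsingleton (((Ext R (ModuleCat.{u} R) i).obj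
        (Opposite.op (ModuleCat.of R M))).obj (ModuleCat.of R (kappa p)))) :
    Subsingleton M := by

  have hP : HasProjectiveResolution (ModuleCat.of R M) := inferInstance
  obtain ⟨P⟩ := hP.out
  let Xc : ℕ → Type u := fun n => P.complex.X n
  let dc : ∀ n, Xc (n+1) →ₗ[R] Xc n := fun n => (P.complex.d (n+1) n).hom
  have hd : ∀ n, dc n ∘ₗ dc (n+1) = 0 := by
    intro n
    have := P.complex.d_comp_d (n+2) (n+1) n
    ext x
    exact congrArg (fun (φ : P.complex.X (n+2) ⟶ P.complex.X n) => φ.hom x) this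
  have hflat : ∀ n, Module.Flat R (Xc n) := by
    intro n
    have : Module.Projective R (P.complex.X n) := by
      rw [IsProjective.iff_projective]
      exact P.projective n
    exact Module.Flat.of_projective
  -- acyclicity of κ(p) ⊗ X_•
  have hκ : ∀ (p : Ideal R) [p.IsPrime], IsAcyc Xc dc (kappa p) := by
    intro p hp
    set K := ModuleCat.of R (kappa p)
    set C := P.complex.linearYonedaObj R K with hC
    have hzero : ∀ i, Limits.IsZero (C.homology i) := by
      intro i
      have := h i p
      have e := P.isoExt (R := R) i K
      have : Subsingleton (C.homology i) := Equiv.subsingleton.symm e.toLinearEquiv.toEquiv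
      exact ModuleCat.isZero_of_subsingleton _
    have hexact : ∀ i, C.ExactAt i := fun i =>
      (HomologicalComplex.exactAt_iff_isZero_homology _ _).mpr (hzero i)
    have hCd : ∀ (i j : ℕ) (f : C.X i), C.d i j f = (ModuleCat.ofHom ((ModuleCat.Hom.hom (f : P.complex.X i ⟶ K)).comp
        (P.complex.d j i).hom) : P.complex.X j ⟶ K) := by
      intro i j f
      simp [hC, ChainComplex.linearYonedaObj_d]
      rfl
    constructor
    · -- surjectivity at the bottom, via degree-0 exactness of the Hom complex
      apply dual_surj (kappa p) (dc 0)
      intro ψ hψ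
      have h0 := hexact 0
      rw [HomologicalComplex.exactAt_iff' _ 0 0 1 (by simp) (by simp)] at h0
      have h0' := (ShortComplex.ShortExact.moduleCat_exact_iff_function_exact _).mp h0
      have hψC : C.d 0 1 (ModuleCat.ofHom ψ : C.X 0) = 0 := by
        refine (hCd 0 1 _).trans ?_
        exact congrArg ModuleCat.ofHom hψ
      obtain ⟨x, hx⟩ := (h0' (ModuleCat.ofHom ψ : C.X 0)).mp hψC
      have hd00 : C.d 0 0 = 0 := HomologicalComplex.shape _ _ _ (by simp)
      have : (ModuleCat.ofHom ψ : C.X 0) = 0 := by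
        rw [← hx]
        show (C.d 0 0) x = 0
        rw [hd00]
        rfl
      exact congrArg ModuleCat.Hom.hom this
    · -- exactness at higher spots
      intro i
      apply dual_exact (kappa p) (dc (i+1)) (dc i) (hd i)
      intro ψ hψ
      have h1 := hexact (i+1)
      rw [HomologicalComplex.exactAt_iff' _ i (i+1) (i+2) (by simp) (by simp)] at h1
      have h1' := (ShortComplex.ShortExact.moduleCat_exact_iff_function_exact _).mp h1
      have hψC : C.d (i+1) (i+2) (ModuleCat.ofHom ψ : C.X (i+1)) = 0 := by
        refine (hCd (i+1) (i+2) _).trans ?_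
        exact congrArg ModuleCat.ofHom hψ
      obtain ⟨χ, hχ⟩ := (h1' (ModuleCat.ofHom ψ : C.X (i+1))).mp hψC
      have hχ' : C.d i (i+1) χ = ModuleCat.ofHom ψ := hχ
      refine ⟨ModuleCat.Hom.hom (χ : P.complex.X i ⟶ K), ?_⟩
      have hχ'' := congrArg (fun (φ : P.complex.X (i+1) ⟶ K) => ModuleCat.Hom.hom φ) hχ'
      rw [hCd i (i+1) χ] at hχ''
      exact hχ''.symm
  -- acyclicity for R⧸⊥, hence M ⊗ (R⧸⊥) = 0, hence M = 0
  have hbot := isAcyc_quotient hd hflat hκ (⊥ : Ideal R)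
  set N := R ⧸ (⊥ : Ideal R)
  -- the augmentation
  let π0 : Xc 0 →ₗ[R] M := (P.π.f 0).hom
  have hsurjπ : Function.Surjective π0 := by
    have : Epi (P.π.f 0) := inferInstance
    exact (ModuleCat.epi_iff_surjective (P.π.f 0)).mp this
  have hexact0 : Function.Exact (dc 0) π0 := by
    have := (ShortComplex.ShortExact.moduleCat_exact_iff_function_exact _).mp P.exact₀
    exact fun y => this y
  have hNM : Subsingleton (N ⊗[R] M) := by
    constructor
    intro v w
    have hall : ∀ v : N ⊗[R] M, v = 0 := by
      intro v
      obtain ⟨y, rfl⟩ := LinearMap.lTensor_surjective N hsurjπ v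
      obtain ⟨z, rfl⟩ := hbot.1 y
      rw [← LinearMap.comp_apply, ← LinearMap.lTensor_comp]
      have hπd : π0 ∘ₗ dc 0 = 0 := by
        ext x
        exact hexact0.apply_apply_eq_zero x
      rw [hπd, LinearMap.lTensor_zero]
      rfl
    rw [hall v, hall w]
  have e : (N ⊗[R] M) ≃ₗ[R] M :=
    (TensorProduct.congr (Submodule.quotEquivOfEqBot (⊥ : Ideal R) rfl)
      (LinearEquiv.refl R M)).trans (TensorProduct.lid R M)
  haveI := hNM
  exact e.symm.toEquiv.subsingleton
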